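/- Let C be a nonnegative integrable random variable and fix T ≥ 0, p ∈ [0,1], and V ≥ 0. Define f(T) = E[C·1{C ≤ T}] + P(C > T)·(p·E[C] + (1−p)·V). If C has a density (its cdf is differentiable) then f is minimized at T* = p·E[C] + (1−p)·V, and f(T*) = E[min(C, T*)]. -/

import Mathlib

open MeasureTheory

/-- The one-step expected cost `f(T) = E[C·1{C ≤ T}] + P(C > T)(p E[C] + (1-p)V)`
of a threshold-`T` policy is minimized at `T* = p·E[C] + (1-p)·V`, where it equals
`E[min(C, T*)]`. -/
theorem optimal_threshold_is_continuation_cost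
    {Ω : Type*} [MeasurableSpace Ω] (μ : Measure Ω) [IsProbabilityMeasure μ]
    (C : Ω → ℝ) (hCmeas : Measurable C) (hCnonneg : ∀ ω, 0 ≤ C ω)
    (hCint : Integrable C μ)
    (hdens : Differentiable ℝ (fun t : ℝ => (μ {ω | C ω ≤ t}).toReal))
    (p : ℝ) (hp : p ∈ Set.Icc (0 : ℝ) 1) (V : ℝ) (hV : 0 ≤ V)
    (f : ℝ → ℝ)
    (hf : ∀ T : ℝ, f T = (∫ ω in {ω | C ω ≤ T}, C ω ∂μ)
      + (μ {ω | T < C ω}).toReal * (p * (∫ ω, C ω ∂μ) + (1 - p) * V)) :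
    (∀ T : ℝ, 0 ≤ T → f (p * (∫ ω, C ω ∂μ) + (1 - p) * V) ≤ f T) ∧
      f (p * (∫ ω, C ω ∂μ) + (1 - p) * V)
        = ∫ ω, min (C ω) (p * (∫ ω, C ω ∂μ) + (1 - p) * V) ∂μ := by
  set K : ℝ := p * (∫ ω, C ω ∂μ) + (1 - p) * V with hK
  have hmeasA : ∀ T : ℝ, MeasurableSet {ω | C ω ≤ T} := fun T =>
    hCmeas measurableSet_Iic
  set g : ℝ → Ω → ℝ := fun T ω => if C ω ≤ T then C ω else K with hg
  have hgint : ∀ T, Integrable (g T) μ := by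
    intro T
    have hrw : g T = fun ω => Set.indicator {ω | C ω ≤ T} C ω
        + Set.indicator {ω | C ω ≤ T}ᶜ (fun _ => K) ω := by
      funext ω
      by_cases h : C ω ≤ T <;> simp [hg, h, Set.indicator]
    rw [hrw]
    exact (hCint.indicator (hmeasA T)).add
      ((integrable_const K).indicator (hmeasA T).compl)
  have hfg : ∀ T, f T = ∫ ω, g T ω ∂μ := by
    intro T
    rw [hf T]
    have hc : {ω | T < C ω} = {ω | C ω ≤ T}ᶜ := by
      ext ω; simp [not_le]
    rw [hc, ← integral_add_compl (hmeasA T) (hgint T)]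
    congr 1
    · refine setIntegral_congr_fun (hmeasA T) fun ω hω => ?_
      simp only [hg]
      rw [if_pos hω.out]
    · have h1 : ∫ ω in {ω | C ω ≤ T}ᶜ, g T ω ∂μ
          = ∫ _ω in {ω | C ω ≤ T}ᶜ, K ∂μ := by
        refine setIntegral_congr_fun (hmeasA T).compl fun ω hω => ?_
        simp only [hg]
        rw [if_neg (by simpa using hω)]
      rw [h1, setIntegral_const, smul_eq_mul, measureReal_def]
  have hmin : ∀ ω, g K ω = min (C ω) K := by
    intro ω
    by_cases h : C ω ≤ K
    · simp [hg, h, min_eq_left h]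
    · simp [hg, h, min_eq_right (le_of_lt (not_le.mp h))]
  constructor
  · intro T _
    rw [hfg K, hfg T]
    refine integral_mono (hgint K) (hgint T) fun ω => ?_
    simp only [hg]
    by_cases h1 : C ω ≤ T <;> by_cases h2 : C ω ≤ K
    · simp [h1, h2]
    · rw [if_pos h1, if_neg h2]; exact le_of_lt (not_le.mp h2)
    · rw [if_neg h1, if_pos h2]; exact h2
    · simp [h1, h2]
  · rw [hfg K]
    exact integral_congr_ae (Filter.Eventually.of_forall fun ω => hmin ω)
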